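/- arXiv:gr-qc/9604017 — 2 statements merged into one kernel-verified Lean document; each statement's English description precedes it below -/
import Mathlib

section
/- Let U ⊆ ℝ^q be open, Γ a continuous field of connection coefficients on U, ψ, σ : U → (Fin q → ℝ) continuous covector fields, and F : U → (Fin q → Fin q → ℝ) a continuous (1,1)-tensor field. Define the na₍₂₎-type deformed connection Γ̄^τ_{αβ} = Γ^τ_{αβ} + ψ_α δ^τ_β + ψ_β δ^τ_α + σ_α F^τ_β + σ_β F^τ_α. If u : (η₁,η₂) → U is an autoparallel of Γ with factor ρ, then for every η the Γ̄-acceleration a^τ(η) := u''^τ(η) + Σ_{α,β} Γ̄^τ_{αβ}(u(η)) u'^α(η) u'^β(η) satisfies a = (ρ + 2 Σ_τ ψ_τ(u) u'^τ) • u' + (2 Σ_τ σ_τ(u) u'^τ) • (F(u)u'), where (F(u)u')^τ = Σ_β F^τ_β(u) u'^β; in particular a(η) lies in the linear span of u'(η) and F(u(η))u'(η). (Hence na₍₂₎-type deformations carry every a-parallel into a nearly autoparallel curve, whose acceleration stays in a 2-dimensional distribution containing the tangent vector.) -/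
/-- Kronecker delta on `Fin q`. -/
def kron {q : ℕ} (μ α : Fin q) : ℝ := if μ = α then 1 else 0

/-- na₍₂₎-type deformations
`Γ̄^τ_{αβ} = Γ^τ_{αβ} + ψ_(α δ^τ_β) + σ_(α F^τ_β)` carry every a-parallel of `Γ`
into a nearly autoparallel curve: its `Γ̄`-acceleration equals
`(ρ + 2ψ_τ u'^τ) • u' + (2σ_τ u'^τ) • (F u')`, hence lies in the span of `u'`
and `F u'`. -/
theorem stmt_8 (q : ℕ) (U : Set (Fin q → ℝ)) (hU : IsOpen U)
    (Γ : (Fin q → ℝ) → Fin q → Fin q → Fin q → ℝ) (hΓ : ContinuousOn Γ U)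
    (ψ σ : (Fin q → ℝ) → Fin q → ℝ) (hψ : ContinuousOn ψ U) (hσ : ContinuousOn σ U)
    (F : (Fin q → ℝ) → Fin q → Fin q → ℝ) (hF : ContinuousOn F U)
    (η₁ η₂ : ℝ) (u u' u'' : ℝ → Fin q → ℝ)
    (hmem : ∀ η ∈ Set.Ioo η₁ η₂, u η ∈ U)
    (hd1 : ∀ η ∈ Set.Ioo η₁ η₂, HasDerivAt u (u' η) η)
    (hd2 : ∀ η ∈ Set.Ioo η₁ η₂, HasDerivAt u' (u'' η) η)
    (ρ : ℝ → ℝ)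
    (hauto : ∀ η ∈ Set.Ioo η₁ η₂, ∀ α,
      u'' η α + ∑ β, ∑ γ, Γ (u η) α β γ * u' η β * u' η γ = ρ η * u' η α) :
    ∀ η ∈ Set.Ioo η₁ η₂,
      (fun τ => u'' η τ + ∑ α, ∑ β,
          (Γ (u η) τ α β + ψ (u η) α * kron τ β + ψ (u η) β * kron τ α +
            σ (u η) α * F (u η) τ β + σ (u η) β * F (u η) τ α) *
            u' η α * u' η β) =
        (ρ η + 2 * ∑ τ, ψ (u η) τ * u' η τ) • u' η +
          (2 * ∑ τ, σ (u η) τ * u' η τ) • (fun τ => ∑ β, F (u η) τ β * u' η β) ∧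
      (fun τ => u'' η τ + ∑ α, ∑ β,
          (Γ (u η) τ α β + ψ (u η) α * kron τ β + ψ (u η) β * kron τ α +
            σ (u η) α * F (u η) τ β + σ (u η) β * F (u η) τ α) *
            u' η α * u' η β) ∈
        Submodule.span ℝ ({u' η, fun τ => ∑ β, F (u η) τ β * u' η β} :
          Set (Fin q → ℝ)) := by
  intro η hη
  have heq : (fun τ => u'' η τ + ∑ α, ∑ β,
          (Γ (u η) τ α β + ψ (u η) α * kron τ β + ψ (u η) β * kron τ α +
            σ (u η) α * F (u η) τ β + σ (u η) β * F (u η) τ α) *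
            u' η α * u' η β) =
        (ρ η + 2 * ∑ τ, ψ (u η) τ * u' η τ) • u' η +
          (2 * ∑ τ, σ (u η) τ * u' η τ) • (fun τ => ∑ β, F (u η) τ β * u' η β) := by
    funext τ
    have h := hauto η hη τ
    simp only [Pi.add_apply, Pi.smul_apply, smul_eq_mul]
    have split : ∀ α β : Fin q,
        (Γ (u η) τ α β + ψ (u η) α * kron τ β + ψ (u η) β * kron τ α +
            σ (u η) α * F (u η) τ β + σ (u η) β * F (u η) τ α) *
            u' η α * u' η β
          = Γ (u η) τ α β * u' η α * u' η β
            + (ψ (u η) α * u' η α) * (kron τ β * u' η β)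
            + (kron τ α * u' η α) * (ψ (u η) β * u' η β)
            + (σ (u η) α * u' η α) * (F (u η) τ β * u' η β)
            + (F (u η) τ α * u' η α) * (σ (u η) β * u' η β) := by
      intro α β; ring
    simp only [split, Finset.sum_add_distrib, ← Finset.mul_sum, ← Finset.sum_mul]
    have hk : ∀ β : Fin q, kron τ β * u' η β = if τ = β then u' η β else 0 := by
      intro β; simp [kron, ite_mul]
    simp only [hk, Finset.sum_ite_eq, Finset.mem_univ, if_true]
    nlinarith [h, sq_nonneg (u' η τ)]
  refine ⟨heq, ?_⟩
  rw [heq]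
  exact Submodule.add_mem _
    (Submodule.smul_mem _ _ (Submodule.subset_span (Set.mem_insert _ _)))
    (Submodule.smul_mem _ _ (Submodule.subset_span (Set.mem_insert_of_mem _ rfl)))
end

section
/- Let U ⊆ ℝ^q be open, Γ a continuous field of connection coefficients on U, ψ : U → (Fin q → ℝ) a continuous covector field, σ : U → (Fin q → Fin q → ℝ) a continuous symmetric bilinear field (σ_{αβ} = σ_{βα}), and φ : U → (Fin q → ℝ) a continuous vector field. Define the na₍₃₎-type deformed connection Γ̄^τ_{αβ} = Γ^τ_{αβ} + ψ_α δ^τ_β + ψ_β δ^τ_α + σ_{αβ} φ^τ. If u : (η₁,η₂) → U is an autoparallel of Γ with factor ρ, then for every η the Γ̄-acceleration a^τ(η) := u''^τ(η) + Σ_{α,β} Γ̄^τ_{αβ}(u(η)) u'^α(η) u'^β(η) satisfies a = (ρ + 2 Σ_τ ψ_τ(u) u'^τ) • u' + (Σ_{α,β} σ_{αβ}(u) u'^α u'^β) • φ(u); in particular a(η) lies in the linear span of u'(η) and φ(u(η)). (Hence na₍₃₎-type deformations carry every a-parallel into a nearly autoparallel curve.) -/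
/-- na₍₃₎-type deformations
`Γ̄^τ_{αβ} = Γ^τ_{αβ} + ψ_(α δ^τ_β) + σ_{αβ} φ^τ` carry every a-parallel of `Γ`
into a nearly autoparallel curve: its `Γ̄`-acceleration equals
`(ρ + 2ψ_τ u'^τ) • u' + (σ_{αβ} u'^α u'^β) • φ`, hence lies in the span of `u'`
and `φ`. -/
theorem stmt_9 (q : ℕ) (U : Set (Fin q → ℝ)) (hU : IsOpen U)
    (Γ : (Fin q → ℝ) → Fin q → Fin q → Fin q → ℝ) (hΓ : ContinuousOn Γ U)
    (ψ : (Fin q → ℝ) → Fin q → ℝ) (hψ : ContinuousOn ψ U)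
    (σ : (Fin q → ℝ) → Fin q → Fin q → ℝ) (hσ : ContinuousOn σ U)
    (hσsymm : ∀ x ∈ U, ∀ α β, σ x α β = σ x β α)
    (φ : (Fin q → ℝ) → Fin q → ℝ) (hφ : ContinuousOn φ U)
    (η₁ η₂ : ℝ) (u u' u'' : ℝ → Fin q → ℝ)
    (hmem : ∀ η ∈ Set.Ioo η₁ η₂, u η ∈ U)
    (hd1 : ∀ η ∈ Set.Ioo η₁ η₂, HasDerivAt u (u' η) η)
    (hd2 : ∀ η ∈ Set.Ioo η₁ η₂, HasDerivAt u' (u'' η) η)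
    (ρ : ℝ → ℝ)
    (hauto : ∀ η ∈ Set.Ioo η₁ η₂, ∀ α,
      u'' η α + ∑ β, ∑ γ, Γ (u η) α β γ * u' η β * u' η γ = ρ η * u' η α) :
    ∀ η ∈ Set.Ioo η₁ η₂,
      (fun τ => u'' η τ + ∑ α, ∑ β,
          (Γ (u η) τ α β + ψ (u η) α * kron τ β + ψ (u η) β * kron τ α +
            σ (u η) α β * φ (u η) τ) * u' η α * u' η β) =
        (ρ η + 2 * ∑ τ, ψ (u η) τ * u' η τ) • u' η +
          (∑ α, ∑ β, σ (u η) α β * u' η α * u' η β) • φ (u η) ∧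
      (fun τ => u'' η τ + ∑ α, ∑ β,
          (Γ (u η) τ α β + ψ (u η) α * kron τ β + ψ (u η) β * kron τ α +
            σ (u η) α β * φ (u η) τ) * u' η α * u' η β) ∈
        Submodule.span ℝ ({u' η, φ (u η)} : Set (Fin q → ℝ)) := by
  intro η hη
  have key : (fun τ => u'' η τ + ∑ α, ∑ β,
      (Γ (u η) τ α β + ψ (u η) α * kron τ β + ψ (u η) β * kron τ α +
        σ (u η) α β * φ (u η) τ) * u' η α * u' η β) =
      (ρ η + 2 * ∑ τ, ψ (u η) τ * u' η τ) • u' η +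
        (∑ α, ∑ β, σ (u η) α β * u' η α * u' η β) • φ (u η) := by
    funext τ
    have h1 : ∀ α, (∑ β, (ψ (u η) α * kron τ β) * u' η α * u' η β)
        = ψ (u η) α * u' η α * u' η τ := by
      intro α
      rw [Finset.sum_eq_single τ]
      · simp [kron]
      · intro b _ hb; simp [kron, Ne.symm hb]
      · simp
    have h2 : ∀ α, (∑ β, (ψ (u η) β * kron τ α) * u' η α * u' η β)
        = kron τ α * u' η α * ∑ β, ψ (u η) β * u' η β := by
      intro α
      rw [Finset.mul_sum]
      exact Finset.sum_congr rfl fun b _ => by ring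
    have h2' : (∑ α, kron τ α * u' η α * ∑ β, ψ (u η) β * u' η β)
        = u' η τ * ∑ β, ψ (u η) β * u' η β := by
      rw [Finset.sum_eq_single τ]
      · simp [kron]
      · intro b _ hb; simp [kron, Ne.symm hb]
      · simp
    have expand : (∑ α, ∑ β,
        (Γ (u η) τ α β + ψ (u η) α * kron τ β + ψ (u η) β * kron τ α +
          σ (u η) α β * φ (u η) τ) * u' η α * u' η β)
        = (∑ α, ∑ β, Γ (u η) τ α β * u' η α * u' η β)
          + (∑ α, ψ (u η) α * u' η α) * u' η τ
          + u' η τ * ∑ β, ψ (u η) β * u' η β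
          + (∑ α, ∑ β, σ (u η) α β * u' η α * u' η β) * φ (u η) τ := by
      have : ∀ α, (∑ β,
          (Γ (u η) τ α β + ψ (u η) α * kron τ β + ψ (u η) β * kron τ α +
            σ (u η) α β * φ (u η) τ) * u' η α * u' η β)
          = (∑ β, Γ (u η) τ α β * u' η α * u' η β)
            + ψ (u η) α * u' η α * u' η τ
            + kron τ α * u' η α * (∑ β, ψ (u η) β * u' η β)
            + (∑ β, σ (u η) α β * u' η α * u' η β) * φ (u η) τ := by
        intro α
        rw [← h1 α, ← h2 α, Finset.sum_mul, ← Finset.sum_add_distrib,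
          ← Finset.sum_add_distrib, ← Finset.sum_add_distrib]
        exact Finset.sum_congr rfl fun b _ => by ring
      rw [Finset.sum_congr rfl fun α _ => this α]
      rw [Finset.sum_add_distrib, Finset.sum_add_distrib, Finset.sum_add_distrib,
        h2', ← Finset.sum_mul, ← Finset.sum_mul]
    have hA := hauto η hη τ
    simp only [Pi.add_apply, Pi.smul_apply, smul_eq_mul]
    rw [expand]
    have : u'' η τ + ∑ α, ∑ β, Γ (u η) τ α β * u' η α * u' η β = ρ η * u' η τ := hA
    nlinarith [this]
  refine ⟨key, ?_⟩
  rw [key]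
  exact Submodule.add_mem _
    (Submodule.smul_mem _ _ (Submodule.subset_span (by simp)))
    (Submodule.smul_mem _ _ (Submodule.subset_span (by simp)))
end
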